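/- Let (X,Y) be a random pair such that the conditional distribution of Y given X has a density f(y|x) with respect to Lebesgue measure on ℝⁿ, with marginal density f(y) = E[f(y|X)]. Then for every 0 < r < 1, with t = (1−r)/(2−r), the mutual information satisfies I(X;Y) ≤ κ(t) · ( e^{h_r(Y)} · V_0(Y|X) )^t. -/

import Mathlib

open MeasureTheory Set
open scoped ENNReal NNReal Real ProbabilityTheory

/- The Kullback–Leibler divergence `D_KL(μ‖ν) = ∫ log(dμ/dν) dμ`, equal to `+∞` when
`μ` is not absolutely continuous with respect to `ν` or the integral is not finite. -/
open Classical in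
noncomputable def klDiv {α : Type*} [MeasurableSpace α] (μ ν : Measure α) : ℝ≥0∞ :=
  if μ ≪ ν ∧ Integrable (MeasureTheory.llr μ ν) μ
    then ENNReal.ofReal (∫ a, MeasureTheory.llr μ ν a ∂μ) else ⊤

/-- `κ(t) = sup_{u > 0} log(1+u)/u^t`. -/
noncomputable def kappaSup (t : ℝ) : ℝ :=
  ⨆ u : Set.Ioi (0 : ℝ), Real.log (1 + (u : ℝ)) / (u : ℝ) ^ t

lemma kappa_bdd {t : ℝ} (ht0 : 0 < t) (ht1 : t ≤ 1) :
    BddAbove (Set.range fun u : Set.Ioi (0 : ℝ) => Real.log (1 + (u : ℝ)) / (u : ℝ) ^ t) := by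
  refine ⟨1 + 1 / t, ?_⟩
  rintro z ⟨⟨u, hu⟩, rfl⟩
  simp only [Set.mem_Ioi] at hu
  have hut : (0:ℝ) < u ^ t := Real.rpow_pos_of_pos hu t
  rw [div_le_iff₀ hut]
  rcases le_or_gt u 1 with h | h
  · have h1 : Real.log (1 + u) ≤ u := by
      have := Real.log_le_sub_one_of_pos (x := 1 + u) (by linarith)
      linarith
    have h2 : u ≤ u ^ t := by
      calc u = u ^ (1:ℝ) := (Real.rpow_one u).symm
      _ ≤ u ^ t := Real.rpow_le_rpow_of_exponent_ge hu h ht1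
    nlinarith [hut, one_div_pos.mpr ht0, mul_nonneg (le_of_lt (one_div_pos.mpr ht0)) hut.le]
  · have h1 : Real.log (1 + u) ≤ Real.log (2 * u) := by
      apply Real.log_le_log (by linarith)
      linarith
    have h2 : Real.log (2 * u) = Real.log 2 + Real.log u := Real.log_mul (by norm_num) (by linarith)
    have h3 : Real.log 2 ≤ 1 := by
      have := Real.log_le_sub_one_of_pos (x := (2:ℝ)) (by norm_num)
      linarith
    have h4 : Real.log u ≤ u ^ t / t := by
      have : Real.log (u ^ t) ≤ u ^ t - 1 := Real.log_le_sub_one_of_pos hut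
      rw [Real.log_rpow (by linarith)] at this
      rw [le_div_iff₀ ht0]
      nlinarith
    have h5 : (1:ℝ) ≤ u ^ t := by
      calc (1:ℝ) = 1 ^ t := (Real.one_rpow t).symm
      _ ≤ u ^ t := Real.rpow_le_rpow (by norm_num) h.le ht0.le
    have := one_div_pos.mpr ht0
    calc Real.log (1 + u) ≤ Real.log 2 + Real.log u := by linarith
    _ ≤ 1 + u ^ t / t := by linarith
    _ ≤ (1 + 1/t) * u ^ t := by
        rw [add_mul, one_mul, div_eq_mul_inv, one_div]
        nlinarith

lemma log_le_kappa {t : ℝ} (ht0 : 0 < t) (ht1 : t ≤ 1) {w : ℝ} (hw : 0 < w) :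
    Real.log (1 + w) ≤ kappaSup t * w ^ t := by
  have h := le_ciSup (kappa_bdd ht0 ht1) ⟨w, hw⟩
  have hwt : (0:ℝ) < w ^ t := Real.rpow_pos_of_pos hw t
  rw [div_le_iff₀ hwt] at h
  exact h.trans_eq (by rfl)

lemma kappa_pos {t : ℝ} (ht0 : 0 < t) (ht1 : t ≤ 1) : 0 < kappaSup t := by
  have h := le_ciSup (kappa_bdd ht0 ht1) ⟨1, by norm_num⟩
  have : (0:ℝ) < Real.log (1 + 1) / (1:ℝ) ^ t := by
    rw [Real.one_rpow]
    norm_num [Real.log_pos (by norm_num : (1:ℝ) < 2)]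
  exact lt_of_lt_of_le this h

lemma phi_nonneg {a b : ℝ} (ha : 0 ≤ a) (hb : 0 < b) :
    0 ≤ a * Real.log (a / b) - a + b := by
  rcases eq_or_lt_of_le ha with h | h
  · simp [← h, hb.le]
  · have h1 : Real.log (b / a) ≤ b / a - 1 := Real.log_le_sub_one_of_pos (by positivity)
    have h2 : Real.log (b / a) = - Real.log (a / b) := by
      rw [← Real.log_inv]; congr 1; field_simp
    have h3 : a * Real.log (b / a) ≤ a * (b / a - 1) := mul_le_mul_of_nonneg_left h1 ha
    rw [h2] at h3
    have h4 : a * (b / a - 1) = b - a := by field_simp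
    nlinarith

lemma core_bound {α : Type*} [MeasurableSpace α] (μ : Measure α) [IsProbabilityMeasure μ]
    {a : α → ℝ} (ha : AEMeasurable a μ) (ha0 : 0 ≤ᵐ[μ] a) (hint : Integrable a μ)
    {t : ℝ} (ht0 : 0 < t) (ht2 : 2 * t ≤ 1) :
    (∫⁻ x, ENNReal.ofReal (a x * Real.log (a x / (∫ x', a x' ∂μ)) - a x + (∫ x', a x' ∂μ)) ∂μ)
      ≤ ENNReal.ofReal (kappaSup t)
        * (∫⁻ x, ENNReal.ofReal ((a x - ∫ x', a x' ∂μ) ^ 2) ∂μ) ^ t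
        * ENNReal.ofReal (∫ x', a x' ∂μ) ^ (1 - 2 * t) := by
  have ht1 : t ≤ 1 := by linarith
  set b := ∫ x', a x' ∂μ with hbdef
  have hb0 : 0 ≤ b := integral_nonneg_of_ae ha0
  rcases eq_or_lt_of_le hb0 with hb | hb
  · have hz : a =ᵐ[μ] 0 := (integral_eq_zero_iff_of_nonneg_ae ha0 hint).mp hb.symm
    have : (fun x => ENNReal.ofReal (a x * Real.log (a x / b) - a x + b)) =ᵐ[μ] 0 := by
      filter_upwards [hz] with x hx
      simp [hx, ← hb]
    rw [lintegral_congr_ae this]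
    simp
  · set V := ∫⁻ x, ENNReal.ofReal ((a x - b) ^ 2) ∂μ with hVdef
    rcases eq_or_ne V ⊤ with hV | hV
    · rw [hV]
      have h1 : ENNReal.ofReal (kappaSup t) * (⊤ : ℝ≥0∞) ^ t = ⊤ := by
        rw [ENNReal.top_rpow_of_pos ht0, ENNReal.mul_top]
        simp [ENNReal.ofReal_eq_zero, not_le, kappa_pos ht0 ht1]
      rw [h1, ENNReal.top_mul]
      · exact le_top
      · exact (ENNReal.rpow_pos (ENNReal.ofReal_pos.mpr hb) ENNReal.ofReal_ne_top).ne'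
    · have hsub : AEMeasurable (fun x => a x - b) μ := ha.sub aemeasurable_const
      have hsq_meas : AEMeasurable (fun x => (a x - b) ^ 2) μ := by
        have : (fun x => (a x - b) ^ 2) = fun x => (a x - b) * (a x - b) := by
          funext x; ring
        rw [this]; exact hsub.mul hsub
      have hsq_int : Integrable (fun x => (a x - b) ^ 2) μ := by
        refine ⟨hsq_meas.aestronglyMeasurable, ?_⟩
        rw [hasFiniteIntegral_iff_ofReal (ae_of_all μ fun x => sq_nonneg _)]
        exact lt_of_le_of_ne le_top hV
      have hVr : ENNReal.ofReal (∫ x, (a x - b) ^ 2 ∂μ) = V :=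
        ofReal_integral_eq_lintegral_ofReal hsq_int (ae_of_all μ fun x => sq_nonneg _)
      set Vr := ∫ x, (a x - b) ^ 2 ∂μ with hVrdef
      have hVr0 : 0 ≤ Vr := integral_nonneg fun x => sq_nonneg _
      have hb2 : (0:ℝ) < b ^ 2 := by positivity
      set c := 1 + Vr / b ^ 2 with hcdef
      have hc1 : (1:ℝ) ≤ c := by
        rw [hcdef]
        have : 0 ≤ Vr / b ^ 2 := div_nonneg hVr0 hb2.le
        linarith
      have hc0 : (0:ℝ) < c := by linarith
      have ha2_int : Integrable (fun x => (a x) ^ 2) μ := by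
        have : (fun x => (a x) ^ 2) =
            fun x => ((a x - b) ^ 2 + (2 * b) * a x) + (- (b ^ 2)) := by
          funext x; ring
        rw [this]
        exact ((hsq_int.add (hint.const_mul _)).add (integrable_const _))
      set H := fun x => (a x) ^ 2 * (1 / (b * c)) + a x * (Real.log c - 2) + b with hHdef
      have hH_int : Integrable H μ :=
        ((ha2_int.mul_const _).add (hint.mul_const _)).add (integrable_const _)
      have hptR : ∀ᵐ x ∂μ, a x * Real.log (a x / b) - a x + b ≤ H x := by
        filter_upwards [ha0] with x hx
        rcases eq_or_lt_of_le hx with h0 | h0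
        · simp only [hHdef, ← h0]
          simp
        · have hz : (0:ℝ) < a x / b := div_pos h0 hb
          have hlog : Real.log (a x / b) ≤ (a x / b) / c + Real.log c - 1 := by
            have h1 : Real.log ((a x / b) / c) ≤ (a x / b) / c - 1 :=
              Real.log_le_sub_one_of_pos (by positivity)
            rw [Real.log_div hz.ne' hc0.ne'] at h1
            linarith
          have h2 : a x * Real.log (a x / b) ≤ a x * ((a x / b) / c + Real.log c - 1) :=
            mul_le_mul_of_nonneg_left hlog hx
          have h3 : a x * ((a x / b) / c + Real.log c - 1)
              = (a x) ^ 2 * (1 / (b * c)) + a x * (Real.log c - 1) := by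
            field_simp
            ring
          simp only [hHdef]
          nlinarith
      have hpt : ∀ᵐ x ∂μ, ENNReal.ofReal (a x * Real.log (a x / b) - a x + b)
          ≤ ENNReal.ofReal (H x) := by
        filter_upwards [hptR] with x hx using ENNReal.ofReal_le_ofReal hx
      have hH0 : 0 ≤ᵐ[μ] H := by
        filter_upwards [hptR, ha0] with x hx hx0
        exact le_trans (phi_nonneg hx0 hb) hx
      have h_a2 : ∫ x, (a x) ^ 2 ∂μ = Vr + b ^ 2 := by
        have hexp : (fun x => (a x - b) ^ 2) =
            fun x => ((a x) ^ 2 + (-2 * b) * a x) + b ^ 2 := by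
          funext x; ring
        have hi1 : Integrable (fun x => (a x) ^ 2 + (-2 * b) * a x) μ :=
          ha2_int.add (hint.const_mul _)
        have : Vr = (∫ x, (a x) ^ 2 ∂μ + (-2 * b) * b) + b ^ 2 := by
          rw [hVrdef, hexp]
          rw [integral_add hi1 (integrable_const _)]
          rw [integral_add ha2_int (hint.const_mul _), integral_const_mul, integral_const]
          simp [← hbdef]
        linarith
      have h_intH : ∫ x, H x ∂μ = b * Real.log c := by
        have hi2 : Integrable (fun x => (a x) ^ 2 * (1 / (b * c)) + a x * (Real.log c - 2)) μ :=
          (ha2_int.mul_const _).add (hint.mul_const _)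
        have e1 : ∫ x, H x ∂μ
            = ∫ x, ((a x) ^ 2 * (1 / (b * c)) + a x * (Real.log c - 2)) ∂μ + ∫ _x, b ∂μ := by
          rw [hHdef]
          exact integral_add hi2 (integrable_const _)
        rw [e1, integral_add (ha2_int.mul_const _) (hint.mul_const _), integral_mul_const,
          integral_mul_const, integral_const, h_a2]
        have hbc : Vr + b ^ 2 = b ^ 2 * c := by
          rw [hcdef]; field_simp; ring
        simp only [probReal_univ, measure_univ, ENNReal.toReal_one, one_smul, ← hbdef]
        rw [hbc]
        field_simp
        ring
      have step1 : (∫⁻ x, ENNReal.ofReal (a x * Real.log (a x / b) - a x + b) ∂μ)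
          ≤ ENNReal.ofReal (b * Real.log c) := by
        calc (∫⁻ x, ENNReal.ofReal (a x * Real.log (a x / b) - a x + b) ∂μ)
            ≤ ∫⁻ x, ENNReal.ofReal (H x) ∂μ := lintegral_mono_ae hpt
          _ = ENNReal.ofReal (∫ x, H x ∂μ) :=
              (ofReal_integral_eq_lintegral_ofReal hH_int hH0).symm
          _ = ENNReal.ofReal (b * Real.log c) := by rw [h_intH]
      rcases eq_or_lt_of_le hVr0 with hVz | hVpos
      · have hc' : c = 1 := by rw [hcdef, ← hVz]; simp
        rw [hc'] at step1
        simp only [Real.log_one, mul_zero, ENNReal.ofReal_zero, le_zero_iff] at step1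
        rw [step1]
        exact zero_le
      · have hw : (0:ℝ) < Vr / b ^ 2 := div_pos hVpos hb2
        have h1 : Real.log c ≤ kappaSup t * (Vr / b ^ 2) ^ t := by
          rw [hcdef]
          exact log_le_kappa ht0 ht1 hw
        have h2 : (Vr / b ^ 2 : ℝ) ^ t = Vr ^ t / b ^ (2 * t) := by
          rw [Real.div_rpow hVr0 hb2.le]
          congr 1
          rw [← Real.rpow_natCast b 2, ← Real.rpow_mul hb0]
          norm_num
        have h3 : b ^ (1 - 2 * t) = b / b ^ (2 * t) := by
          rw [Real.rpow_sub hb, Real.rpow_one]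
        have hbt : (0:ℝ) < b ^ (2 * t) := Real.rpow_pos_of_pos hb _
        have key : b * Real.log c ≤ kappaSup t * Vr ^ t * b ^ (1 - 2 * t) := by
          calc b * Real.log c ≤ b * (kappaSup t * (Vr / b ^ 2) ^ t) :=
                mul_le_mul_of_nonneg_left h1 hb0
            _ = kappaSup t * Vr ^ t * (b / b ^ (2 * t)) := by
                rw [h2]; field_simp
            _ = kappaSup t * Vr ^ t * b ^ (1 - 2 * t) := by rw [h3]
        calc (∫⁻ x, ENNReal.ofReal (a x * Real.log (a x / b) - a x + b) ∂μ)
            ≤ ENNReal.ofReal (kappaSup t * Vr ^ t * b ^ (1 - 2 * t)) :=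
              step1.trans (ENNReal.ofReal_le_ofReal key)
          _ = ENNReal.ofReal (kappaSup t) * V ^ t * ENNReal.ofReal b ^ (1 - 2 * t) := by
              rw [ENNReal.ofReal_mul (mul_nonneg (kappa_pos ht0 ht1).le (Real.rpow_nonneg hVr0 t)),
                ENNReal.ofReal_mul (kappa_pos ht0 ht1).le,
                ← hVr, ENNReal.ofReal_rpow_of_pos hVpos, ENNReal.ofReal_rpow_of_pos hb]

/-- **Proposition 8.** Let `(X,Y)` be a random pair where the conditional distribution of `Y`
given `X` has density `f(·|x)` on `ℝⁿ`, with marginal density `f_Y(y) = E[f(y|X)]` and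
support `S_Y`. Then for every `0 < r < 1`, with `t = (1−r)/(2−r)`, the mutual information
`I(X;Y) = D_KL(P_{XY} ‖ P_X × P_Y)` satisfies
`I(X;Y) ≤ κ(t) (e^{h_r(Y)} V_0(Y|X))^t`,
where `e^{h_r(Y)} = (∫ f_Y^r)^{1/(1−r)}` and
`V_0(Y|X) = ∫_{S_Y} Var(f(y|X)) dy`, `Var(f(y|X)) = E[(f(y|X) − f_Y(y))²]` (the right-hand
side being interpreted in `[0,∞]`). -/
theorem mutual_information_renyi_entropy_bound {n : ℕ}
    {Ω : Type*} [MeasureSpace Ω] [IsProbabilityMeasure (ℙ : Measure Ω)]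
    {𝒳 : Type*} [MeasurableSpace 𝒳]
    (X : Ω → 𝒳) (hX : Measurable X)
    (Y : Ω → EuclideanSpace ℝ (Fin n)) (hY : Measurable Y)
    (f : 𝒳 → EuclideanSpace ℝ (Fin n) → ℝ)
    (hf : Measurable (Function.uncurry f)) (hf0 : ∀ x y, 0 ≤ f x y)
    (κ : ProbabilityTheory.Kernel 𝒳 (EuclideanSpace ℝ (Fin n))) [ProbabilityTheory.IsMarkovKernel κ]
    (hκ : ∀ x, κ x = volume.withDensity (fun y => ENNReal.ofReal (f x y)))
    (hjoint : Measure.map (fun ω => (X ω, Y ω)) ℙ = (Measure.map X ℙ) ⊗ₘ κ)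
    (r : ℝ) (hr0 : 0 < r) (hr1 : r < 1) :
    klDiv (Measure.map (fun ω => (X ω, Y ω)) ℙ) ((Measure.map X ℙ).prod (Measure.map Y ℙ))
      ≤ ENNReal.ofReal (kappaSup ((1 - r) / (2 - r)))
        * ((∫⁻ y, ENNReal.ofReal (∫ ω, f (X ω) y ∂ℙ) ^ r) ^ (1 / (1 - r))
            * ∫⁻ y in {y | 0 < ∫ ω, f (X ω) y ∂ℙ},
                ∫⁻ ω, ENNReal.ofReal ((f (X ω) y - ∫ ω', f (X ω') y ∂ℙ) ^ 2) ∂ℙ)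
          ^ ((1 - r) / (2 - r)) := by
  classical
  set μ : Measure 𝒳 := Measure.map X ℙ with hμdef
  haveI hμprob : IsProbabilityMeasure μ := Measure.isProbabilityMeasure_map hX.aemeasurable
  haveI hπprob : IsProbabilityMeasure (Measure.map (fun ω => (X ω, Y ω)) ℙ) :=
    Measure.isProbabilityMeasure_map (hX.prodMk hY).aemeasurable
  haveI hνYprob : IsProbabilityMeasure (Measure.map Y ℙ) :=
    Measure.isProbabilityMeasure_map hY.aemeasurable
  set t := (1 - r) / (2 - r) with htdef
  have h2r : (0:ℝ) < 2 - r := by linarith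
  have h1r : (0:ℝ) < 1 - r := by linarith
  have ht0 : 0 < t := div_pos h1r h2r
  have ht2 : 2 * t ≤ 1 := by
    rw [htdef, ← mul_div_assoc, div_le_one h2r]; linarith
  have ht1 : t ≤ 1 := by linarith
  have h12t : (0:ℝ) < 1 - 2 * t := by
    rw [htdef, ← mul_div_assoc, sub_pos, div_lt_one h2r]; linarith
  -- measurability basics
  have hfm : Measurable fun p : 𝒳 × EuclideanSpace ℝ (Fin n) => ENNReal.ofReal (f p.1 p.2) :=
    ENNReal.measurable_ofReal.comp hf
  have hfym : ∀ y, Measurable fun x => f x y := fun y => hf.comp measurable_prodMk_right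
  set G : EuclideanSpace ℝ (Fin n) → ℝ≥0∞ := fun y => ∫⁻ x, ENNReal.ofReal (f x y) ∂μ
    with hGdef
  have hGm : Measurable G := hfm.lintegral_prod_left'
  -- replace ℙ-integrals by μ-integrals in the goal
  have hfYrw : ∀ y, (∫ ω, f (X ω) y ∂ℙ) = ∫ x, f x y ∂μ := fun y =>
    (integral_map hX.aemeasurable (hfym y).aestronglyMeasurable).symm
  have hVrw : ∀ y, (∫⁻ ω, ENNReal.ofReal ((f (X ω) y - ∫ x, f x y ∂μ) ^ 2) ∂ℙ)
      = ∫⁻ x, ENNReal.ofReal ((f x y - ∫ x', f x' y ∂μ) ^ 2) ∂μ := by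
    intro y
    have hmeas : Measurable fun x : 𝒳 => ENNReal.ofReal ((f x y - ∫ x', f x' y ∂μ) ^ 2) :=
      ENNReal.measurable_ofReal.comp (((hfym y).sub measurable_const).pow_const 2)
    exact (lintegral_map hmeas hX).symm
  simp only [hfYrw, hVrw]
  set fY : EuclideanSpace ℝ (Fin n) → ℝ := fun y => ∫ x, f x y ∂μ with hfYdef
  have hfYm : Measurable fY := by
    have h1 : StronglyMeasurable fun p : EuclideanSpace ℝ (Fin n) × 𝒳 => f p.2 p.1 :=
      (hf.comp measurable_swap).stronglyMeasurable
    exact h1.integral_prod_right'.measurable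
  have hfY0 : ∀ y, 0 ≤ fY y := fun y => integral_nonneg fun x => hf0 x y
  set m : Measure (𝒳 × EuclideanSpace ℝ (Fin n)) := μ.prod volume with hmdef
  -- π = m.withDensity fe
  have hπ : Measure.map (fun ω => (X ω, Y ω)) ℙ
      = m.withDensity (fun p => ENNReal.ofReal (f p.1 p.2)) := by
    rw [hjoint]
    ext s hs
    rw [Measure.compProd_apply hs, withDensity_apply _ hs, ← lintegral_indicator hs,
      lintegral_prod _ (hfm.indicator hs).aemeasurable]
    congr 1
    funext x
    rw [hκ x, withDensity_apply _ (measurable_prodMk_left hs),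
      ← lintegral_indicator (measurable_prodMk_left hs)]
    apply lintegral_congr
    intro y
    simp [Set.indicator_apply, Set.mem_preimage]
  -- marginal of Y
  have hν2 : Measure.map Y ℙ = volume.withDensity G := by
    have hcomp : Prod.snd ∘ (fun ω => (X ω, Y ω)) = Y := rfl
    have h1 : Measure.map Y ℙ
        = Measure.map Prod.snd (Measure.map (fun ω => (X ω, Y ω)) ℙ) := by
      rw [Measure.map_map measurable_snd (hX.prodMk hY), hcomp]
    rw [h1, hπ]
    ext s hs
    rw [Measure.map_apply measurable_snd hs, withDensity_apply _ (measurable_snd hs),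
      withDensity_apply _ hs, ← lintegral_indicator (measurable_snd hs),
      lintegral_prod_symm _ (hfm.indicator (measurable_snd hs)).aemeasurable,
      ← lintegral_indicator hs]
    apply lintegral_congr
    intro y
    by_cases hy : y ∈ s
    · have : ∀ x, (Prod.snd ⁻¹' s).indicator
          (fun p : 𝒳 × EuclideanSpace ℝ (Fin n) => ENNReal.ofReal (f p.1 p.2)) (x, y)
          = ENNReal.ofReal (f x y) := fun x => by
        simp [Set.indicator_apply, Set.mem_preimage, hy]
      simp only [this, Set.indicator_of_mem hy]; rfl
    · have : ∀ x, (Prod.snd ⁻¹' s).indicator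
          (fun p : 𝒳 × EuclideanSpace ℝ (Fin n) => ENNReal.ofReal (f p.1 p.2)) (x, y)
          = 0 := fun x => by
        simp [Set.indicator_apply, Set.mem_preimage, hy]
      simp only [this, Set.indicator_of_notMem hy, lintegral_zero]
  -- the product reference measure
  have hν : μ.prod (Measure.map Y ℙ) = m.withDensity (fun p => G p.2) := by
    rw [hν2]
    ext s hs
    rw [Measure.prod_apply hs, withDensity_apply _ hs, ← lintegral_indicator hs, hmdef,
      lintegral_prod _ (((show Measurable fun q : 𝒳 × EuclideanSpace ℝ (Fin n) => G q.2
        from hGm.comp measurable_snd).indicator hs).aemeasurable)]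
    apply lintegral_congr
    intro x
    rw [withDensity_apply _ (measurable_prodMk_left hs),
      ← lintegral_indicator (measurable_prodMk_left hs)]
    apply lintegral_congr
    intro y
    simp [Set.indicator_apply, Set.mem_preimage]
  -- G integrates to 1
  have hGint : ∫⁻ y, G y ∂(volume : Measure (EuclideanSpace ℝ (Fin n))) = 1 := by
    have h1 : (Measure.map Y ℙ) Set.univ = 1 := measure_univ
    rw [hν2, withDensity_apply _ MeasurableSet.univ, Measure.restrict_univ] at h1
    exact h1
  have hGfin : ∀ᵐ y ∂(volume : Measure (EuclideanSpace ℝ (Fin n))), G y < ⊤ :=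
    ae_lt_top hGm (by rw [hGint]; exact ENNReal.one_ne_top)
  have haeint : ∀ᵐ y ∂(volume : Measure (EuclideanSpace ℝ (Fin n))),
      Integrable (fun x => f x y) μ := by
    filter_upwards [hGfin] with y hy
    refine ⟨(hfym y).aestronglyMeasurable, ?_⟩
    rw [hasFiniteIntegral_iff_ofReal (ae_of_all _ fun x => hf0 x y)]
    exact hy
  have hfYG : ∀ᵐ y ∂(volume : Measure (EuclideanSpace ℝ (Fin n))),
      ENNReal.ofReal (fY y) = G y := by
    filter_upwards [haeint] with y hy
    exact ofReal_integral_eq_lintegral_ofReal hy (ae_of_all _ fun x => hf0 x y)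
  -- transport vol-a.e. statements to m-a.e. statements about the second coordinate
  have hsnd_null : ∀ {p : EuclideanSpace ℝ (Fin n) → Prop},
      (∀ᵐ y ∂(volume : Measure (EuclideanSpace ℝ (Fin n))), p y) →
      ∀ᵐ q : 𝒳 × EuclideanSpace ℝ (Fin n) ∂m, p q.2 := by
    intro p hp
    rw [ae_iff] at hp ⊢
    set N := toMeasurable (volume : Measure (EuclideanSpace ℝ (Fin n))) {y | ¬ p y} with hN
    have hNm : MeasurableSet N := measurableSet_toMeasurable _ _
    have hsub : {q : 𝒳 × EuclideanSpace ℝ (Fin n) | ¬ p q.2} ⊆ Prod.snd ⁻¹' N :=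
      fun q hq => subset_toMeasurable _ _ hq
    refine measure_mono_null hsub ?_
    rw [hmdef, Measure.prod_apply (measurable_snd hNm)]
    have : ∀ x : 𝒳, (volume : Measure (EuclideanSpace ℝ (Fin n)))
        (Prod.mk x ⁻¹' (Prod.snd ⁻¹' N)) = 0 := by
      intro x
      have : Prod.mk x ⁻¹' (Prod.snd ⁻¹' N) = N := rfl
      rw [this, hN, measure_toMeasurable]
      exact hp
    simp [this]
  -- f vanishes a.e. (w.r.t. m) on the set where G vanishes
  have hmeas0 : MeasurableSet {q : 𝒳 × EuclideanSpace ℝ (Fin n) | G q.2 = 0} :=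
    (hGm.comp measurable_snd) (measurableSet_singleton 0)
  have hzero_int : ∫⁻ q in {q : 𝒳 × EuclideanSpace ℝ (Fin n) | G q.2 = 0},
      ENNReal.ofReal (f q.1 q.2) ∂m = 0 := by
    rw [← lintegral_indicator hmeas0, hmdef,
      lintegral_prod_symm _ (hfm.indicator hmeas0).aemeasurable]
    have key : ∀ y, (∫⁻ x, ({q : 𝒳 × EuclideanSpace ℝ (Fin n) | G q.2 = 0}).indicator
        (fun p => ENNReal.ofReal (f p.1 p.2)) (x, y) ∂μ) = 0 := by
      intro y
      by_cases hy : G y = 0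
      · have h1 : ∀ x, ({q : 𝒳 × EuclideanSpace ℝ (Fin n) | G q.2 = 0}).indicator
            (fun p => ENNReal.ofReal (f p.1 p.2)) (x, y) = ENNReal.ofReal (f x y) := fun x => by
          simp [Set.indicator_apply, hy]
        simp only [h1]
        exact hy
      · have h1 : ∀ x, ({q : 𝒳 × EuclideanSpace ℝ (Fin n) | G q.2 = 0}).indicator
            (fun p => ENNReal.ofReal (f p.1 p.2)) (x, y) = 0 := fun x => by
          simp [Set.indicator_apply, hy]
        simp only [h1, lintegral_zero]
    simp only [key, lintegral_zero]
  have hfe0 : ∀ᵐ q ∂m, G q.2 = 0 → ENNReal.ofReal (f q.1 q.2) = 0 := by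
    have h1 : (fun q : 𝒳 × EuclideanSpace ℝ (Fin n) => ENNReal.ofReal (f q.1 q.2))
        =ᵐ[m.restrict {q | G q.2 = 0}] 0 :=
      (lintegral_eq_zero_iff' hfm.aemeasurable.restrict).mp hzero_int
    exact (ae_restrict_iff' hmeas0).mp h1
  have hGtop_m : ∀ᵐ q ∂m, G q.2 ≠ ⊤ := hsnd_null (hGfin.mono fun y h => h.ne)
  -- density of the joint w.r.t. the product reference measure
  set D : 𝒳 × EuclideanSpace ℝ (Fin n) → ℝ≥0∞ :=
    fun q => ENNReal.ofReal (f q.1 q.2) / G q.2 with hDdef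
  have hDm : Measurable D := hfm.div (hGm.comp measurable_snd)
  have hkey : m.withDensity (fun p => ENNReal.ofReal (f p.1 p.2))
      = (m.withDensity fun p => G p.2).withDensity D := by
    have h1 : m.withDensity (fun p => ENNReal.ofReal (f p.1 p.2))
        = m.withDensity ((fun p : 𝒳 × EuclideanSpace ℝ (Fin n) => G p.2) * D) := by
      apply withDensity_congr_ae
      filter_upwards [hGtop_m, hfe0] with q hq1 hq2
      simp only [Pi.mul_apply, hDdef]
      by_cases h : G q.2 = 0
      · rw [hq2 h]; simp [h]
      · rw [ENNReal.mul_div_cancel h hq1]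
    rw [h1, withDensity_mul _ (show Measurable fun p : 𝒳 × EuclideanSpace ℝ (Fin n) => G p.2
      from hGm.comp measurable_snd) hDm]
  set ν : Measure (𝒳 × EuclideanSpace ℝ (Fin n)) := μ.prod (Measure.map Y ℙ) with hνdef
  haveI hνprob : IsProbabilityMeasure ν := by rw [hνdef]; infer_instance
  have hπν : Measure.map (fun ω => (X ω, Y ω)) ℙ = ν.withDensity D := by
    rw [hπ, hkey, ← hν]
  have hAC : Measure.map (fun ω => (X ω, Y ω)) ℙ ≪ ν := by
    rw [hπν]; exact withDensity_absolutelyContinuous _ _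
  have hrn : (Measure.map (fun ω => (X ω, Y ω)) ℙ).rnDeriv ν =ᵐ[ν] D := by
    rw [hπν]; exact Measure.rnDeriv_withDensity ν hDm
  have hACm : Measure.map (fun ω => (X ω, Y ω)) ℙ ≪ m := by
    rw [hπ]; exact withDensity_absolutelyContinuous _ _
  have hrn_π : (Measure.map (fun ω => (X ω, Y ω)) ℙ).rnDeriv ν
      =ᵐ[Measure.map (fun ω => (X ω, Y ω)) ℙ] D := hrn.filter_mono hAC.ae_le
  have hfpos_π : ∀ᵐ q ∂(Measure.map (fun ω => (X ω, Y ω)) ℙ), 0 < f q.1 q.2 := by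
    rw [hπ, ae_withDensity_iff hfm]
    refine ae_of_all _ fun q hq => ?_
    rcases (hf0 q.1 q.2).lt_or_eq with h | h
    · exact h
    · exact absurd (by simp [← h]) hq
  have hG_pos_π : ∀ᵐ q ∂(Measure.map (fun ω => (X ω, Y ω)) ℙ), G q.2 ≠ 0 := by
    rw [hπ, ae_withDensity_iff hfm]
    filter_upwards [hfe0] with q hq1 hq2 hG0
    exact hq2 (hq1 hG0)
  have hGtop_π : ∀ᵐ q ∂(Measure.map (fun ω => (X ω, Y ω)) ℙ), G q.2 ≠ ⊤ :=
    hACm.ae_le hGtop_m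
  have hfYG_π : ∀ᵐ q ∂(Measure.map (fun ω => (X ω, Y ω)) ℙ),
      ENNReal.ofReal (fY q.2) = G q.2 := hACm.ae_le (hsnd_null hfYG)
  have hllr : llr (Measure.map (fun ω => (X ω, Y ω)) ℙ) ν
      =ᵐ[Measure.map (fun ω => (X ω, Y ω)) ℙ]
      fun q => Real.log (f q.1 q.2 / fY q.2) := by
    filter_upwards [hrn_π, hfpos_π, hG_pos_π, hGtop_π, hfYG_π] with q h1 h2 h3 h4 h5
    simp only [llr_def]
    rw [h1]
    simp only [hDdef]
    rw [← h5, ENNReal.toReal_div, ENNReal.toReal_ofReal (hf0 _ _),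
      ENNReal.toReal_ofReal (hfY0 _)]
  -- the nonnegative KL integrand
  set L := llr (Measure.map (fun ω => (X ω, Y ω)) ℙ) ν with hLdef
  set F : 𝒳 × EuclideanSpace ℝ (Fin n) → ℝ :=
    fun q => f q.1 q.2 * Real.log (f q.1 q.2 / fY q.2) - f q.1 q.2 + fY q.2 with hFdef
  have hFm : Measurable F :=
    ((hf.mul (Real.measurable_log.comp (hf.div (hfYm.comp measurable_snd)))).sub hf).add
      (hfYm.comp measurable_snd)
  have hF0 : ∀ᵐ q ∂m, 0 ≤ F q := by
    filter_upwards [hsnd_null hfYG, hfe0] with q h1 h2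
    rcases eq_or_lt_of_le (hfY0 q.2) with h | h
    · have hG0 : G q.2 = 0 := by rw [← h1, ← h]; simp
      have hf00 : f q.1 q.2 = 0 :=
        le_antisymm (by simpa [ENNReal.ofReal_eq_zero] using h2 hG0) (hf0 _ _)
      simp [hFdef, hf00, ← h]
    · exact phi_nonneg (hf0 _ _) h
  set I := ∫⁻ q, ENNReal.ofReal (F q) ∂m with hIdef
  have hKle : klDiv (Measure.map (fun ω => (X ω, Y ω)) ℙ) ν ≤ I := by
    rcases eq_or_ne I ⊤ with htop | hItop
    · rw [htop]; exact le_top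
    · have hFint : Integrable F m := by
        refine ⟨hFm.aestronglyMeasurable, ?_⟩
        rw [hasFiniteIntegral_iff_ofReal hF0]
        exact lt_top_iff_ne_top.mpr hItop
      have hfub : ∫⁻ q, ENNReal.ofReal (f q.1 q.2) ∂m = 1 := by
        have h1 : (m.withDensity fun p => ENNReal.ofReal (f p.1 p.2)) Set.univ = 1 := by
          rw [← hπ]; exact measure_univ
        rw [withDensity_apply _ MeasurableSet.univ, Measure.restrict_univ] at h1
        exact h1
      have hfint_m : Integrable (fun q : 𝒳 × EuclideanSpace ℝ (Fin n) => f q.1 q.2) m := by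
        refine ⟨hf.aestronglyMeasurable, ?_⟩
        rw [hasFiniteIntegral_iff_ofReal
          (ae_of_all _ fun q : 𝒳 × EuclideanSpace ℝ (Fin n) => hf0 q.1 q.2), hfub]
        exact ENNReal.one_lt_top
      have hfYub : ∫⁻ q, ENNReal.ofReal (fY q.2) ∂m = 1 := by
        have h1 : ∫⁻ q, ENNReal.ofReal (fY q.2) ∂m = ∫⁻ q, G q.2 ∂m :=
          lintegral_congr_ae ((hsnd_null hfYG).mono fun q hq => hq)
        rw [h1, hmdef, lintegral_prod _ ((show Measurable
          fun q : 𝒳 × EuclideanSpace ℝ (Fin n) => G q.2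
          from hGm.comp measurable_snd).aemeasurable)]
        simp [hGint]
      have hfYint_m : Integrable (fun q : 𝒳 × EuclideanSpace ℝ (Fin n) => fY q.2) m := by
        refine ⟨(hfYm.comp measurable_snd).aestronglyMeasurable, ?_⟩
        rw [hasFiniteIntegral_iff_ofReal
          (ae_of_all _ fun q : 𝒳 × EuclideanSpace ℝ (Fin n) => hfY0 q.2), hfYub]
        exact ENNReal.one_lt_top
      have hllr_m : ∀ᵐ q ∂m, ENNReal.ofReal (f q.1 q.2) ≠ 0 →
          L q = Real.log (f q.1 q.2 / fY q.2) := by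
        refine (ae_withDensity_iff hfm).mp ?_
        rw [← hπ]
        exact hllr
      have hcomb : (fun q => f q.1 q.2 * L q)
          =ᵐ[m] fun q => F q + (f q.1 q.2 - fY q.2) := by
        filter_upwards [hllr_m] with q hq
        show f q.1 q.2 * L q = F q + (f q.1 q.2 - fY q.2)
        by_cases h : f q.1 q.2 = 0
        · simp [hFdef, h]
        · have hpos : 0 < f q.1 q.2 := lt_of_le_of_ne (hf0 _ _) (Ne.symm h)
          have hq' := hq (by simp [ENNReal.ofReal_eq_zero, not_le, hpos])
          rw [hq']
          simp only [hFdef]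
          ring
      have hsubint : Integrable (fun q : 𝒳 × EuclideanSpace ℝ (Fin n) =>
          f q.1 q.2 - fY q.2) m := hfint_m.sub hfYint_m
      have hcomb_int : Integrable (fun q => f q.1 q.2 * L q) m :=
        ((hFint.add hsubint).congr hcomb.symm)
      have hρm : Measurable fun q : 𝒳 × EuclideanSpace ℝ (Fin n) => (f q.1 q.2).toNNReal :=
        hf.real_toNNReal
      have hρ : (fun p : 𝒳 × EuclideanSpace ℝ (Fin n) => ENNReal.ofReal (f p.1 p.2))
          = fun p => ((f p.1 p.2).toNNReal : ℝ≥0∞) := rfl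
      have hsmul : (fun q : 𝒳 × EuclideanSpace ℝ (Fin n) => (f q.1 q.2).toNNReal • L q)
          =ᵐ[m] fun q => f q.1 q.2 * L q :=
        ae_of_all _ fun q => by
          show (f q.1 q.2).toNNReal • L q = f q.1 q.2 * L q
          rw [NNReal.smul_def, Real.coe_toNNReal _ (hf0 _ _), smul_eq_mul]
      have hllr_int : Integrable L (Measure.map (fun ω => (X ω, Y ω)) ℙ) := by
        rw [hπ, hρ, integrable_withDensity_iff_integrable_smul hρm]
        exact hcomb_int.congr hsmul.symm
      have hint_eq : ∫ q, L q ∂(Measure.map (fun ω => (X ω, Y ω)) ℙ) = ∫ q, F q ∂m := by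
        rw [hπ, hρ, integral_withDensity_eq_integral_smul hρm]
        rw [integral_congr_ae (hsmul.trans hcomb)]
        rw [integral_add hFint hsubint, integral_sub hfint_m hfYint_m]
        have hf1 : ∫ q, f q.1 q.2 ∂m = 1 := by
          rw [integral_eq_lintegral_of_nonneg_ae
            (ae_of_all _ fun q : 𝒳 × EuclideanSpace ℝ (Fin n) => hf0 q.1 q.2)
            hf.aestronglyMeasurable, hfub]
          simp
        have hfY1 : ∫ q, fY q.2 ∂m = 1 := by
          rw [integral_eq_lintegral_of_nonneg_ae
            (ae_of_all _ fun q : 𝒳 × EuclideanSpace ℝ (Fin n) => hfY0 q.2)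
            (hfYm.comp measurable_snd).aestronglyMeasurable, hfYub]
          simp
        rw [hf1, hfY1]
        ring
      rw [klDiv, if_pos ⟨hAC, hllr_int⟩, hint_eq,
        ofReal_integral_eq_lintegral_ofReal hFint hF0]
  -- the analytic part
  have hfold : ∀ y, (∫ x, f x y ∂μ) = fY y := fun _ => rfl
  try simp only [hfold]
  refine hKle.trans ?_
  set Vy : EuclideanSpace ℝ (Fin n) → ℝ≥0∞ :=
    fun y => ∫⁻ x, ENNReal.ofReal ((f x y - fY y) ^ 2) ∂μ with hVydef
  have hfoldV : ∀ y, (∫⁻ x, ENNReal.ofReal ((f x y - fY y) ^ 2) ∂μ) = Vy y := fun _ => rfl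
  try simp only [hfoldV]
  have hVym : Measurable Vy := by
    have h1 : Measurable fun p : 𝒳 × EuclideanSpace ℝ (Fin n) =>
        ENNReal.ofReal ((f p.1 p.2 - fY p.2) ^ 2) :=
      ENNReal.measurable_ofReal.comp ((hf.sub (hfYm.comp measurable_snd)).pow_const 2)
    exact h1.lintegral_prod_left'
  have hFub : I = ∫⁻ y, (∫⁻ x, ENNReal.ofReal (F (x, y)) ∂μ)
      ∂(volume : Measure (EuclideanSpace ℝ (Fin n))) := by
    rw [hIdef, hmdef, lintegral_prod_symm _ (show Measurable
      fun q : 𝒳 × EuclideanSpace ℝ (Fin n) => ENNReal.ofReal (F q)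
      from ENNReal.measurable_ofReal.comp hFm).aemeasurable]
  have hpercore : ∀ᵐ y ∂(volume : Measure (EuclideanSpace ℝ (Fin n))),
      (∫⁻ x, ENNReal.ofReal (F (x, y)) ∂μ)
        ≤ ENNReal.ofReal (kappaSup t) * (Vy y ^ t * ENNReal.ofReal (fY y) ^ (1 - 2 * t)) := by
    filter_upwards [haeint] with y hy
    have h1 := core_bound μ (a := fun x => f x y) (hfym y).aemeasurable
      (ae_of_all _ fun x => hf0 x y) hy ht0 ht2
    rw [← mul_assoc]
    exact h1
  calc I = ∫⁻ y, (∫⁻ x, ENNReal.ofReal (F (x, y)) ∂μ)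
        ∂(volume : Measure (EuclideanSpace ℝ (Fin n))) := hFub
    _ ≤ ∫⁻ y, ENNReal.ofReal (kappaSup t)
          * (Vy y ^ t * ENNReal.ofReal (fY y) ^ (1 - 2 * t)) ∂volume :=
        lintegral_mono_ae hpercore
    _ = ENNReal.ofReal (kappaSup t)
          * ∫⁻ y, Vy y ^ t * ENNReal.ofReal (fY y) ^ (1 - 2 * t) ∂volume :=
        lintegral_const_mul' _ _ ENNReal.ofReal_ne_top
    _ ≤ ENNReal.ofReal (kappaSup t)
        * ((∫⁻ y, ENNReal.ofReal (fY y) ^ r) ^ (1 / (1 - r))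
            * ∫⁻ y in {y | 0 < fY y}, Vy y) ^ t := by
      refine mul_le_mul_right ?_ _
      have hS : MeasurableSet {y : EuclideanSpace ℝ (Fin n) | 0 < fY y} :=
        measurableSet_lt measurable_const hfYm
      have hrt : r * (1 - t) = 1 - 2 * t := by
        rw [htdef]
        field_simp
        ring
      have hpe : ∀ y, Vy y ^ t * ENNReal.ofReal (fY y) ^ (1 - 2 * t)
          = ({y | 0 < fY y}.indicator Vy y) ^ t * (ENNReal.ofReal (fY y) ^ r) ^ (1 - t) := by
        intro y
        rw [← ENNReal.rpow_mul, hrt]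
        by_cases hy : 0 < fY y
        · rw [Set.indicator_of_mem (show y ∈ {y | 0 < fY y} from hy) Vy]
        · have h0 : fY y = 0 := le_antisymm (not_lt.mp hy) (hfY0 y)
          rw [Set.indicator_of_notMem (show y ∉ {y | 0 < fY y} from hy) Vy, h0, ENNReal.ofReal_zero,
            ENNReal.zero_rpow_of_pos h12t, ENNReal.zero_rpow_of_pos ht0]
          simp
      have hconj : Real.HolderConjugate (1/t) (1/(1-t)) := by
        rw [Real.holderConjugate_iff]
        constructor
        · exact one_lt_one_div ht0 (by linarith)
        · rw [one_div, one_div, inv_inv, inv_inv]; ring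
      have hA : AEMeasurable (fun y => ({y | 0 < fY y}.indicator Vy y) ^ t)
          (volume : Measure (EuclideanSpace ℝ (Fin n))) :=
        ((hVym.indicator hS).pow_const t).aemeasurable
      have hB : AEMeasurable (fun y => (ENNReal.ofReal (fY y) ^ r) ^ (1 - t))
          (volume : Measure (EuclideanSpace ℝ (Fin n))) :=
        (((ENNReal.measurable_ofReal.comp hfYm).pow_const r).pow_const (1 - t)).aemeasurable
      have hH := ENNReal.lintegral_mul_le_Lp_mul_Lq
        (volume : Measure (EuclideanSpace ℝ (Fin n))) hconj hA hB
      simp only [Pi.mul_apply] at hH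
      have e1 : ∀ y, (({y | 0 < fY y}.indicator Vy y) ^ t) ^ (1/t)
          = {y | 0 < fY y}.indicator Vy y := by
        intro y
        rw [← ENNReal.rpow_mul, mul_one_div_cancel ht0.ne', ENNReal.rpow_one]
      have e2 : ∀ y, ((ENNReal.ofReal (fY y) ^ r) ^ (1 - t)) ^ (1/(1-t))
          = ENNReal.ofReal (fY y) ^ r := by
        intro y
        rw [← ENNReal.rpow_mul, mul_one_div_cancel (by linarith : (1:ℝ) - t ≠ 0),
          ENNReal.rpow_one]
      simp only [e1, e2, one_div_one_div] at hH
      rw [lintegral_congr hpe]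
      refine le_trans hH ?_
      rw [lintegral_indicator hS]
      rw [ENNReal.mul_rpow_of_nonneg _ _ ht0.le, ← ENNReal.rpow_mul]
      have h3 : 1/(1-r) * t = 1 - t := by
        rw [htdef]
        field_simp
        norm_num
      rw [h3, mul_comm]
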